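/- Under the stated hypotheses, the upper-right p×(d−p) block of the matrix product G·A vanishes: (GA)_{12} = 0. -/

import Mathlib

open MeasureTheory Matrix Real

section Aux

open Filter Set

lemma polyGauss (α β c : ℝ) (hc : 0 < c) :
    Integrable (fun t : ℝ => (α + β * t) * Real.exp (-c * t ^ 2)) := by
  have h1 := (integrable_exp_neg_mul_sq hc).const_mul α
  have h2 := (integrable_mul_exp_neg_mul_sq hc).const_mul β
  have := h1.add h2
  refine this.congr ?_
  filter_upwards with t
  simp only [Pi.add_apply]
  ring

lemma expQuad (a b q0 u : ℝ) (ha : 0 < a) (t : ℝ) :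
    Real.exp (-(1/2) * (q0 + 2*b*t + a*t^2) - u)
      = Real.exp (-(a/2) * (t + b/a) ^ 2) * Real.exp (b^2/(2*a) - q0/2 - u) := by
  rw [← Real.exp_add]
  congr 1
  field_simp
  ring

lemma oneDim (a b q0 u v : ℝ) (ha : 0 < a) :
    ∫ t : ℝ, v * (b + a * t) * Real.exp (-(1/2) * (q0 + 2*b*t + a*t^2) - u) = 0 := by
  set F : ℝ → ℝ := fun t => v * (b + a * t) * Real.exp (-(1/2) * (q0 + 2*b*t + a*t^2) - u)
    with hF
  set f : ℝ → ℝ := fun t => -v * Real.exp (-(1/2) * (q0 + 2*b*t + a*t^2) - u) with hf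
  have hderiv : ∀ t : ℝ, HasDerivAt f (F t) t := by
    intro t
    have h1 : HasDerivAt (fun t : ℝ => -(1/2) * (q0 + 2*b*t + a*t^2) - u)
        (-(b + a * t)) t := by
      have hq0 : HasDerivAt (fun t : ℝ => q0 + 2*b*t + a*t^2) (2*b*1 + a*(↑2 * t^(2-1))) t :=
        (((hasDerivAt_id t).const_mul (2*b)).const_add q0).add
          ((hasDerivAt_pow 2 t).const_mul a)
      have hq : HasDerivAt (fun t : ℝ => q0 + 2*b*t + a*t^2) (2*b + a*(2*t)) t := by
        convert hq0 using 1
        push_cast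
        ring
      have := (hq.const_mul (-(1/2))).sub_const u
      refine this.congr_deriv ?_
      ring
    have := (h1.exp.const_mul (-v))
    refine this.congr_deriv ?_
    simp only [hF]
    ring
  have hFint : Integrable F := by
    have hG : Integrable (fun s : ℝ => ((v*b - v*a*(b/a)) + v*a*s)
        * Real.exp (-(a/2) * s ^ 2) * Real.exp (b^2/(2*a) - q0/2 - u)) := by
      refine Integrable.mul_const ?_ _
      have := polyGauss (v*b - v*a*(b/a)) (v*a) (a/2) (by positivity)
      refine this.congr ?_
      filter_upwards with s
      ring_nf
    have := hG.comp_add_right (b/a)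
    refine this.congr ?_
    filter_upwards with t
    simp only [hF]
    rw [expQuad a b q0 u ha t]
    have hane : a ≠ 0 := ne_of_gt ha
    field_simp
    ring
  have hsq_top : Tendsto (fun t : ℝ => (t + b/a) ^ 2) atTop atTop :=
    (tendsto_pow_atTop two_ne_zero).comp (tendsto_atTop_add_const_right _ _ tendsto_id)
  have hsq_bot : Tendsto (fun t : ℝ => (t + b/a) ^ 2) atBot atTop := by
    have habs : Tendsto (fun t : ℝ => |t + b/a|) atBot atTop :=
      tendsto_abs_atBot_atTop.comp (tendsto_atBot_add_const_right _ _ tendsto_id)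
    have := (tendsto_pow_atTop two_ne_zero).comp habs
    refine this.congr fun t => ?_
    simp [sq_abs]
  have hf0 : ∀ (l : Filter ℝ), Tendsto (fun t : ℝ => (t + b/a) ^ 2) l atTop →
      Tendsto f l (nhds 0) := by
    intro l hl
    have hexp : Tendsto (fun t : ℝ => -(a/2) * (t + b/a) ^ 2) l atBot := by
      have h1 : Tendsto (fun t : ℝ => (a/2) * (t + b/a) ^ 2) l atTop :=
        hl.const_mul_atTop (by positivity)
      have := tendsto_neg_atTop_atBot.comp h1
      refine this.congr fun t => ?_
      simp only [Function.comp]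
      ring
    have hbase : Tendsto (fun t : ℝ => -v * (Real.exp (-(a/2) * (t + b/a) ^ 2)
        * Real.exp (b^2/(2*a) - q0/2 - u))) l
        (nhds (-v * (0 * Real.exp (b^2/(2*a) - q0/2 - u)))) :=
      Tendsto.const_mul _
        (((Real.tendsto_exp_atBot.comp hexp).mul_const _))
    have h2 : Tendsto f l (nhds (-v * (0 * Real.exp (b^2/(2*a) - q0/2 - u)))) := by
      refine hbase.congr fun t => ?_
      simp only [hf]
      rw [expQuad a b q0 u ha t]
    simpa using h2
  have hIoi : ∫ t in Set.Ioi (0:ℝ), F t = 0 - f 0 :=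
    integral_Ioi_of_hasDerivAt_of_tendsto' (fun t _ => hderiv t) hFint.integrableOn
      (hf0 atTop hsq_top)
  have hIic : ∫ t in Set.Iic (0:ℝ), F t = f 0 - 0 :=
    integral_Iic_of_hasDerivAt_of_tendsto' (fun t _ => hderiv t) hFint.integrableOn
      (hf0 atBot hsq_bot)
  have hsplit := intervalIntegral.integral_Iic_add_Ioi (μ := volume) (f := F) (b := 0)
    hFint.integrableOn hFint.integrableOn
  calc (∫ t : ℝ, F t) = (∫ t in Set.Iic (0:ℝ), F t) + ∫ t in Set.Ioi (0:ℝ), F t :=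
        hsplit.symm
    _ = 0 := by rw [hIoi, hIic]; ring

lemma quadExpand {d : ℕ} (A : Matrix (Fin d) (Fin d) ℝ) (hA : A.IsSymm)
    (z v : Fin d → ℝ) (t : ℝ) :
    (z + t • v) ⬝ᵥ A.mulVec (z + t • v)
      = z ⬝ᵥ A.mulVec z + 2 * t * (v ⬝ᵥ A.mulVec z) + t ^ 2 * (v ⬝ᵥ A.mulVec v) := by
  have hsym : z ⬝ᵥ A.mulVec v = v ⬝ᵥ A.mulVec z := by
    rw [dotProduct_mulVec, ← hA.eq, vecMul_transpose, dotProduct_comm, hA.eq]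
  simp only [add_dotProduct, dotProduct_add, mulVec_add, mulVec_smul, smul_dotProduct,
    dotProduct_smul, smul_eq_mul, hsym]
  ring

lemma integral_pi_unique {κ : Type*} [u : Unique κ] [F : Fintype κ] (g : (κ → ℝ) → ℝ) :
    ∫ x : κ → ℝ, g x = ∫ t : ℝ, g (fun _ => t) := by
  have h : F = Unique.fintype := Subsingleton.elim _ _
  subst h
  exact ((MeasurePreserving.symm (MeasurableEquiv.funUnique κ ℝ)
    (volume_preserving_funUnique κ ℝ)).integral_comp
    (MeasurableEquiv.funUnique κ ℝ).symm.measurableEmbedding g).symm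

lemma sliceZeroP {ι : Type*} [Fintype ι] [DecidableEq ι] (j : ι) (P : ι → Prop)
    [DecidablePred P] (hP : ∀ k, P k ↔ k = j)
    (F : (ι → ℝ) → ℝ) (hF : Integrable F)
    (h0 : ∀ z : ι → ℝ, ∫ t : ℝ, F (Function.update z j t) = 0) :
    ∫ x : ι → ℝ, F x = 0 := by
  set E := MeasurableEquiv.piEquivPiSubtypeProd (fun _ : ι => ℝ) P with hE
  have MP : MeasurePreserving E volume volume :=
    volume_preserving_piEquivPiSubtypeProd (fun _ : ι => ℝ) P
  have hcomp : Integrable (fun q => F (E.symm q)) :=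
    ((MP.symm).integrable_comp_emb E.symm.measurableEmbedding (g := F)).mpr hF
  have h1 : ∫ x : ι → ℝ, F x = ∫ q, F (E.symm q) :=
    ((MP.symm).integral_comp E.symm.measurableEmbedding F).symm
  rw [h1]
  have h2 : (∫ q, F (E.symm q))
      = ∫ y : ({k : ι // ¬ P k} → ℝ), ∫ u : ({k : ι // P k} → ℝ), F (E.symm (u, y)) :=
    integral_prod_symm (fun q => F (E.symm q)) hcomp
  rw [h2]
  haveI : Unique {k : ι // P k} :=
    ⟨⟨⟨j, (hP j).mpr rfl⟩⟩, fun k => Subtype.ext ((hP k.1).mp k.2)⟩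
  have h3 : ∀ y : ({k : ι // ¬ P k} → ℝ),
      ∫ u : ({k : ι // P k} → ℝ), F (E.symm (u, y)) = 0 := by
    intro y
    have h4 : ∫ u : ({k : ι // P k} → ℝ), F (E.symm (u, y))
        = ∫ t : ℝ, F (E.symm ((fun _ => t), y)) :=
      integral_pi_unique (fun u => F (E.symm (u, y)))
    rw [h4]
    set z : ι → ℝ := E.symm ((fun _ => (0:ℝ)), y) with hz
    have hzt : ∀ t : ℝ,
        E.symm ((fun _ => t), y) = Function.update z j t := by
      intro t
      funext k
      by_cases h : P k
      · have hkj : k = j := (hP k).mp h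
        subst hkj
        simp [hz, hE, h, MeasurableEquiv.piEquivPiSubtypeProd,
          Equiv.piEquivPiSubtypeProd, MeasurableEquiv.funUnique, Function.update]
      · have hkj : k ≠ j := fun hc => h ((hP k).mpr hc)
        simp [hz, hE, h, hkj, MeasurableEquiv.piEquivPiSubtypeProd,
          Equiv.piEquivPiSubtypeProd, Function.update]
    simp only [hzt]
    exact h0 z
  simp only [h3]
  simp

lemma sliceZero {ι : Type*} [Fintype ι] [DecidableEq ι] (j : ι)
    (F : (ι → ℝ) → ℝ) (hF : Integrable F)
    (h0 : ∀ z : ι → ℝ, ∫ t : ℝ, F (Function.update z j t) = 0) :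
    ∫ x : ι → ℝ, F x = 0 :=
  sliceZeroP j (fun k => k = j) (fun _ => Iff.rfl) F hF h0

end Aux

/-- **Vanishing of the upper-right block of `G·A`.**
For the Gibbs second-moment matrix `G` of the classical impurity model, the
upper-right `p × (d−p)` block of the product `G·A` vanishes. -/
theorem GA_upper_right_block_vanishes
    (d p : ℕ) (hd : 0 < d) (hp : p ≤ d)
    (A : Matrix (Fin d) (Fin d) ℝ) (hA : A.IsSymm)
    (hA22 : ∀ v : Fin d → ℝ, (∀ i : Fin d, (i : ℕ) < p → v i = 0) → v ≠ 0 →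
      0 < v ⬝ᵥ A.mulVec v)
    (U : (Fin d → ℝ) → ℝ) (hUmeas : Measurable U)
    (hU : ∀ x y : Fin d → ℝ, (∀ i : Fin d, (i : ℕ) < p → x i = y i) → U x = U y)
    (hZint : Integrable (fun x : Fin d → ℝ =>
      Real.exp (-(1/2) * (x ⬝ᵥ A.mulVec x) - U x)))
    (hmom : ∀ i j : Fin d, Integrable (fun x : Fin d → ℝ =>
      x i * x j * Real.exp (-(1/2) * (x ⬝ᵥ A.mulVec x) - U x)))
    (Z : ℝ)
    (hZdef : Z = ∫ x : Fin d → ℝ, Real.exp (-(1/2) * (x ⬝ᵥ A.mulVec x) - U x))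
    (G : Matrix (Fin d) (Fin d) ℝ)
    (hGdef : ∀ i j : Fin d, G i j = (1 / Z) * ∫ x : Fin d → ℝ,
      x i * x j * Real.exp (-(1/2) * (x ⬝ᵥ A.mulVec x) - U x)) :
    ∀ i j : Fin d, (i : ℕ) < p → p ≤ (j : ℕ) → (G * A) i j = 0 := by
  intro i j hi hj
  have hij : i ≠ j := by
    intro h
    rw [h] at hi
    omega
  set e : (Fin d → ℝ) → ℝ :=
    fun x => Real.exp (-(1/2) * (x ⬝ᵥ A.mulVec x) - U x) with he
  have hajj : 0 < A j j := by
    have h1 : ∀ i' : Fin d, (i' : ℕ) < p → (Pi.single j 1 : Fin d → ℝ) i' = 0 := by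
      intro i' hi'
      have h' : i' ≠ j := by intro h; rw [h] at hi'; omega
      exact Pi.single_eq_of_ne h' 1
    have h2 : (Pi.single j 1 : Fin d → ℝ) ≠ 0 := by
      intro h
      have := congrFun h j
      simp at this
    have := hA22 (Pi.single j 1) h1 h2
    simpa [single_dotProduct, mulVec_single] using this
  set F : (Fin d → ℝ) → ℝ := fun x => x i * A.mulVec x j * e x with hFdef
  have hFsum : ∀ x : Fin d → ℝ, F x = ∑ k, A j k * (x i * x k * e x) := by
    intro x
    simp only [hFdef, Matrix.mulVec, dotProduct]
    rw [Finset.mul_sum, Finset.sum_mul]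
    refine Finset.sum_congr rfl fun k _ => by ring
  have hmom' : ∀ k : Fin d, Integrable (fun x : Fin d → ℝ => A j k * (x i * x k * e x)) := by
    intro k
    have := (hmom i k).const_mul (A j k)
    simpa only [he] using this
  have hFint : Integrable F := by
    have hs : Integrable (fun x : Fin d → ℝ => ∑ k : Fin d, A j k * (x i * x k * e x)) :=
      integrable_finset_sum Finset.univ fun k _ => hmom' k
    exact hs.congr (Filter.Eventually.of_forall fun x => (hFsum x).symm)
  have h0 : ∀ z : Fin d → ℝ, ∫ t : ℝ, F (Function.update z j t) = 0 := by
    intro z0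
    set z : Fin d → ℝ := Function.update z0 j 0 with hzdef
    set v : Fin d → ℝ := Pi.single j 1 with hv
    have hupdate : ∀ t : ℝ, Function.update z0 j t = z + t • v := by
      intro t
      funext k
      by_cases h : k = j
      · subst h
        simp [hzdef, hv, Function.update]
      · simp [hzdef, hv, h, Function.update, Pi.single_eq_of_ne h]
    have hvz : v ⬝ᵥ A.mulVec z = A.mulVec z j := by
      simp [hv, single_dotProduct]
    have hvv : v ⬝ᵥ A.mulVec v = A j j := by
      simp [hv, single_dotProduct, mulVec_single]
    have hslice : ∀ t : ℝ,
        F (z + t • v) = z i * (A.mulVec z j + A j j * t)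
          * Real.exp (-(1/2) * (z ⬝ᵥ A.mulVec z + 2*(A.mulVec z j)*t + A j j * t^2)
            - U z) := by
      intro t
      have hxi : (z + t • v) i = z i := by
        simp [hv, Pi.single_eq_of_ne hij]
      have hmv : A.mulVec (z + t • v) j = A.mulVec z j + A j j * t := by
        rw [mulVec_add, mulVec_smul]
        simp [hv, mulVec_single]
        ring
      have hquad := quadExpand A hA z v t
      have hUz : U (z + t • v) = U z := by
        apply hU
        intro k hk
        have hkj : k ≠ j := by intro h; rw [h] at hk; omega
        simp [hv, Pi.single_eq_of_ne hkj]
      simp only [hFdef, he, hxi, hmv, hquad, hUz, hvz, hvv]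
      ring_nf
    have hcalc : ∀ t : ℝ, F (Function.update z0 j t)
        = z i * (A.mulVec z j + A j j * t)
          * Real.exp (-(1/2) * (z ⬝ᵥ A.mulVec z + 2*(A.mulVec z j)*t + A j j * t^2)
            - U z) := by
      intro t; rw [hupdate t, hslice t]
    simp only [hcalc]
    exact oneDim (A j j) (A.mulVec z j) (z ⬝ᵥ A.mulVec z) (U z) (z i) hajj
  have Key : ∫ x : Fin d → ℝ, F x = 0 := sliceZero j F hFint h0
  have hcomm : ∀ k : Fin d, A k j = A j k := fun k =>
    (congrFun (congrFun hA k) j).symm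
  rw [Matrix.mul_apply]
  have hterm : ∀ k : Fin d, G i k * A k j
      = (1 / Z) * ∫ x : Fin d → ℝ, A j k * (x i * x k * e x) := by
    intro k
    rw [hGdef i k, hcomm k, MeasureTheory.integral_const_mul]
    simp only [he]
    ring
  rw [Finset.sum_congr rfl fun k _ => hterm k]
  rw [← Finset.mul_sum]
  rw [← integral_finset_sum _ (fun k _ => hmom' k)]
  have hfin : ∫ x : Fin d → ℝ, ∑ k, A j k * (x i * x k * e x) = 0 := by
    rw [← Key]
    congr 1
    funext x
    rw [hFsum x]
  rw [hfin, mul_zero]
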